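/- Let k ≥ 2, p = p_1 + ... + p_k, and let Σ ∈ R^{p×p} be the block matrix with diagonal blocks Σ_{ii} = U_i U_i^T + Ψ_{ii} and off-diagonal blocks Σ_{ij} = U_i U_j^T (i ≠ j), where U_i ∈ R^{p_i×r}, each Ψ_{ii} is symmetric positive definite, and Σ0 = diag(Σ_{11},...,Σ_{kk}). Let U = [U_1^T, ..., U_k^T]^T ∈ R^{p×r} and assume rank(U) = r and σ_r(Σ0^{-1/2} U) ≥ 1. Define Y ∈ R^{p×r} as the block matrix whose i-th block is (U_i^†)^T, where U_i^† ∈ R^{r×p_i} is the Moore–Penrose pseudoinverse of U_i (i.e. Y = [U_1^†, U_2^†, ..., U_k^†]^T). Then the multiplicity of 1 as a generalized eigenvalue of Σ with respect to Σ0 equals p − Σ_{i=1}^k rank(U_i) + r − rank(U − U Y^T U). -/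

import Mathlib

open MeasureTheory ProbabilityTheory Matrix Real
open scoped Classical

noncomputable section

/-- Frobenius norm of a real matrix. -/
def frob {m n : ℕ} (M : Matrix (Fin m) (Fin n) ℝ) : ℝ :=
  Real.sqrt (∑ i, ∑ j, (M i j) ^ 2)

/-- Distance between `p × r` matrices modulo right multiplication by an orthogonal matrix:
`dist(U,V) = min_{P ∈ O(r)} ‖U P - V‖_F`. -/
def gdist {p r : ℕ} (U V : Matrix (Fin p) (Fin r) ℝ) : ℝ :=
  sInf {x : ℝ | ∃ P : Matrix (Fin r) (Fin r) ℝ, Pᵀ * P = 1 ∧ x = frob (U * P - V)}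

/-- Centered multivariate Gaussian with covariance `S`, as the law of `S^{1/2} z` for a
standard Gaussian vector `z`. -/
def mvGaussian {m : ℕ} (S : Matrix (Fin m) (Fin m) ℝ) : Measure (Fin m → ℝ) :=
  if h : S.PosSemidef then
    (Measure.pi fun _ : Fin m => gaussianReal 0 1).map fun z =>
      ((h.1.eigenvectorUnitary : Matrix (Fin m) (Fin m) ℝ) * diagonal (Real.sqrt ∘ h.1.eigenvalues) *
        star (h.1.eigenvectorUnitary : Matrix (Fin m) (Fin m) ℝ)).mulVec z
  else 0

/-- Law of `n` i.i.d. samples from `N_m(0, S)`. -/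
def iidLaw (n : ℕ) {m : ℕ} (S : Matrix (Fin m) (Fin m) ℝ) : Measure (Fin n → Fin m → ℝ) :=
  Measure.pi fun _ : Fin n => mvGaussian S

def sampleMean {n m : ℕ} (X : Fin n → Fin m → ℝ) (i : Fin m) : ℝ := (∑ t, X t i) / n

/-- Sample covariance matrix. -/
def sampleCov {n m : ℕ} (X : Fin n → Fin m → ℝ) : Matrix (Fin m) (Fin m) ℝ :=
  Matrix.of fun i j => (∑ t, (X t i - sampleMean X i) * (X t j - sampleMean X j)) / n

/-- Block-diagonal part of a matrix with respect to block labels `β`. -/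
def blockPart {m k : ℕ} (β : Fin m → Fin k) (M : Matrix (Fin m) (Fin m) ℝ) :
    Matrix (Fin m) (Fin m) ℝ :=
  Matrix.of fun i j => if β i = β j then M i j else 0

/-- Rows of `M` belonging to block `i`, all other rows zeroed out. -/
def restrictRows {m k c : ℕ} (β : Fin m → Fin k) (i : Fin k) (M : Matrix (Fin m) (Fin c) ℝ) :
    Matrix (Fin m) (Fin c) ℝ :=
  Matrix.of fun a b => if β a = i then M a b else 0

/-- ℓ₂ norm of row `i` of `M`. -/
def rowNorm {m r : ℕ} (M : Matrix (Fin m) (Fin r) ℝ) (i : Fin m) : ℝ :=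
  Real.sqrt (∑ j, (M i j) ^ 2)

/-- Set of indices of nonzero rows. -/
def rowSupport {m r : ℕ} (M : Matrix (Fin m) (Fin r) ℝ) : Set (Fin m) := {i | M i ≠ 0}

/-- `W'` is the hard thresholding of `W` keeping the `k` rows of largest ℓ₂ norm
(ties broken toward smaller indices). -/
def IsHT {m r : ℕ} (W : Matrix (Fin m) (Fin r) ℝ) (k : ℕ) (W' : Matrix (Fin m) (Fin r) ℝ) : Prop :=
  ∃ C : Finset (Fin m), C.card = min k m ∧ (∀ i ∈ C, W' i = W i) ∧ (∀ i ∉ C, W' i = 0) ∧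
    ∀ i ∈ C, ∀ j ∉ C, rowNorm W j < rowNorm W i ∨ (rowNorm W j = rowNorm W i ∧ i < j)

/-- Positive semidefinite square root (junk value `0` if not psd). -/
def psqrt {r : ℕ} (M : Matrix (Fin r) (Fin r) ℝ) : Matrix (Fin r) (Fin r) ℝ :=
  if h : M.PosSemidef then
    (h.1.eigenvectorUnitary : Matrix (Fin r) (Fin r) ℝ) * diagonal (Real.sqrt ∘ h.1.eigenvalues) *
      star (h.1.eigenvectorUnitary : Matrix (Fin r) (Fin r) ℝ)
  else 0

/-- Inverse square root. -/
def invSqrt {r : ℕ} (M : Matrix (Fin r) (Fin r) ℝ) : Matrix (Fin r) (Fin r) ℝ := (psqrt M)⁻¹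

/-- Nuclear norm `Tr √(Mᵀ M)`. -/
def nucNorm {a b : ℕ} (M : Matrix (Fin a) (Fin b) ℝ) : ℝ := (psqrt (Mᵀ * M)).trace

/-- Entrywise ℓ₁ norm. -/
def l1Norm {a b : ℕ} (M : Matrix (Fin a) (Fin b) ℝ) : ℝ := ∑ i, ∑ j, |M i j|

/-- Entrywise sup norm. -/
def maxAbs {a b : ℕ} (M : Matrix (Fin a) (Fin b) ℝ) : ℝ := sSup {x : ℝ | ∃ i j, x = |M i j|}

/-- Membership in the Fantope `{X : 0 ⪯ X ⪯ I, Tr X = r}`. -/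
def InFantope {p : ℕ} (r : ℕ) (X : Matrix (Fin p) (Fin p) ℝ) : Prop :=
  X.PosSemidef ∧ (1 - X).PosSemidef ∧ X.trace = (r : ℝ)

/-- `F` minimizes `-⟨Sh, ·⟩ + ρ ‖·‖_1` over symmetric matrices whose conjugation by
`S0h^{1/2}` lies in the Fantope. -/
def IsFantopeMin {p : ℕ} (r : ℕ) (Sh S0h : Matrix (Fin p) (Fin p) ℝ) (ρ : ℝ)
    (F : Matrix (Fin p) (Fin p) ℝ) : Prop :=
  F.IsSymm ∧ InFantope r (psqrt S0h * F * psqrt S0h) ∧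
    ∀ G : Matrix (Fin p) (Fin p) ℝ, G.IsSymm → InFantope r (psqrt S0h * G * psqrt S0h) →
      -(Shᵀ * F).trace + ρ * l1Norm F ≤ -(Shᵀ * G).trace + ρ * l1Norm G

/-- `L` maximizes `⟨Sh, L Lᵀ⟩` subject to `Lᵀ S0h L = I_r` and row support inside `I`. -/
def IsRestrictedMax {p r : ℕ} (Sh S0h : Matrix (Fin p) (Fin p) ℝ) (I : Finset (Fin p))
    (L : Matrix (Fin p) (Fin r) ℝ) : Prop :=
  Lᵀ * S0h * L = 1 ∧ (∀ i ∉ I, L i = 0) ∧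
    ∀ L' : Matrix (Fin p) (Fin r) ℝ, L'ᵀ * S0h * L' = 1 → (∀ i ∉ I, L' i = 0) →
      (Shᵀ * (L' * L'ᵀ)).trace ≤ (Shᵀ * (L * Lᵀ)).trace

/-- Kullback–Leibler divergence `∫ log (dP/dQ) dP`. -/
def klDivR {α : Type*} [MeasurableSpace α] (P Q : Measure α) : ℝ :=
  ∫ x, Real.log (P.rnDeriv Q x).toReal ∂P


lemma aux_sum_restrict {p k c : ℕ} (β : Fin p → Fin k) (M : Matrix (Fin p) (Fin c) ℝ) :
    ∑ i, restrictRows β i M = M := by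
  ext a b
  simp [restrictRows, Matrix.sum_apply]

lemma aux_orth {p k c d : ℕ} (β : Fin p → Fin k) {i j : Fin k} (hij : i ≠ j)
    (A : Matrix (Fin p) (Fin c) ℝ) (B : Matrix (Fin p) (Fin d) ℝ) :
    (restrictRows β i A)ᵀ * restrictRows β j B = 0 := by
  ext s t
  simp only [Matrix.mul_apply, Matrix.transpose_apply, restrictRows, Matrix.of_apply,
    Matrix.zero_apply]
  refine Finset.sum_eq_zero fun a _ => ?_
  by_cases h' : β a = j
  · by_cases h : β a = i
    · exact absurd (h.symm.trans h') hij
    · rw [if_neg h, zero_mul]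
  · rw [if_neg h', mul_zero]

lemma aux_absorb {p k c d : ℕ} (β : Fin p → Fin k) (i : Fin k)
    (A : Matrix (Fin p) (Fin c) ℝ) (B : Matrix (Fin p) (Fin d) ℝ) :
    (restrictRows β i A)ᵀ * B = (restrictRows β i A)ᵀ * restrictRows β i B := by
  ext s t
  simp only [Matrix.mul_apply, Matrix.transpose_apply, restrictRows, Matrix.of_apply]
  refine Finset.sum_congr rfl fun a _ => ?_
  by_cases h : β a = i <;> simp [h]

lemma aux_blockPart {p k c : ℕ} (β : Fin p → Fin k)
    (A B : Matrix (Fin p) (Fin c) ℝ) :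
    blockPart β (A * Bᵀ) = ∑ i, restrictRows β i A * (restrictRows β i B)ᵀ := by
  ext a b
  simp only [blockPart, Matrix.of_apply, Matrix.sum_apply, Matrix.mul_apply,
    Matrix.transpose_apply, restrictRows]
  by_cases h : β a = β b
  · rw [if_pos h]
    rw [Finset.sum_eq_single (β a)]
    · refine Finset.sum_congr rfl fun s _ => ?_
      simp [h]
    · intro j _ hj
      refine Finset.sum_eq_zero fun s _ => ?_
      rw [if_neg (fun hh => hj hh.symm), zero_mul]
    · simp
  · rw [if_neg h]
    refine (Finset.sum_eq_zero fun j _ => Finset.sum_eq_zero fun s _ => ?_).symm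
    by_cases h1 : β a = j
    · rw [if_neg (fun h2 : β b = j => h (h1.trans h2.symm)), mul_zero]
    · rw [if_neg h1, zero_mul]

lemma aux_blockPart_add {p k : ℕ} (β : Fin p → Fin k) (A B : Matrix (Fin p) (Fin p) ℝ) :
    blockPart β (A + B) = blockPart β A + blockPart β B := by
  ext a b
  by_cases h : β a = β b <;> simp [blockPart, h]

lemma aux_sum_mulVec {p q k : ℕ} (A : Fin k → Matrix (Fin p) (Fin q) ℝ) (x : Fin q → ℝ) :
    (∑ i, A i) *ᵥ x = ∑ i, (A i) *ᵥ x := by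
  ext a
  simp only [Matrix.mulVec, dotProduct, Matrix.sum_apply, Finset.sum_apply,
    Finset.sum_mul]
  exact Finset.sum_comm

lemma aux_rank_eq_trace {n : ℕ} (Q : Matrix (Fin n) (Fin n) ℝ) (h : Q * Q = Q) :
    (Q.rank : ℝ) = Q.trace := by
  have hc : Q.mulVecLin ∘ₗ Q.mulVecLin = Q.mulVecLin := by rw [← Matrix.mulVecLin_mul, h]
  have hproj : LinearMap.IsProj (LinearMap.range Q.mulVecLin) Q.mulVecLin := by
    constructor
    · intro x; exact LinearMap.mem_range_self _ x
    · rintro x ⟨y, rfl⟩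
      exact congrFun (congrArg (fun f => f.toFun) hc) y
  have ht := hproj.trace
  rw [LinearMap.trace_eq_matrix_trace ℝ (Pi.basisFun ℝ (Fin n)),
    LinearMap.toMatrix_eq_toMatrix'] at ht
  rw [show LinearMap.toMatrix' Q.mulVecLin = Q from LinearMap.toMatrix'_toLin' Q] at ht
  rw [Matrix.rank, ht]

section pinvlems
variable {p r : ℕ} (A B : Matrix (Fin p) (Fin r) ℝ)

lemma pinv_AG (h1 : A * Bᵀ * A = A) : A * (Bᵀ * A) = A := by rw [← Matrix.mul_assoc, h1]

lemma pinv_GAt (h1 : A * Bᵀ * A = A) (h4 : (Bᵀ * A)ᵀ = Bᵀ * A) : (Bᵀ * A) * Aᵀ = Aᵀ := by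
  rw [← h4, ← Matrix.transpose_mul, pinv_AG A B h1]

lemma pinv_GG (h2 : Bᵀ * A * Bᵀ = Bᵀ) : (Bᵀ * A) * (Bᵀ * A) = Bᵀ * A := by
  rw [← Matrix.mul_assoc, h2]

lemma pinv_AtB (h4 : (Bᵀ * A)ᵀ = Bᵀ * A) : Aᵀ * B = Bᵀ * A := by
  rw [← h4, Matrix.transpose_mul, Matrix.transpose_transpose]

lemma pinv_rank (h1 : A * Bᵀ * A = A) : (Bᵀ * A).rank = A.rank := by
  refine le_antisymm (Matrix.rank_mul_le_right _ _) ?_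
  conv_lhs => rw [← pinv_AG A B h1]
  exact Matrix.rank_mul_le_right _ _

end pinvlems

lemma aux_sum_mulVec' {p q k : ℕ} (A : Fin k → Matrix (Fin p) (Fin q) ℝ) (x : Fin q → ℝ) :
    (∑ i, A i) *ᵥ x = ∑ i, (A i) *ᵥ x := by
  ext a
  simp only [Matrix.mulVec, dotProduct, Matrix.sum_apply, Finset.sum_apply,
    Finset.sum_mul]
  exact Finset.sum_comm

lemma aux_rank_eq_trace' {n : ℕ} (Q : Matrix (Fin n) (Fin n) ℝ) (h : Q * Q = Q) :
    (Q.rank : ℝ) = Q.trace := by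
  have hc : Q.mulVecLin ∘ₗ Q.mulVecLin = Q.mulVecLin := by rw [← Matrix.mulVecLin_mul, h]
  have hproj : LinearMap.IsProj (LinearMap.range Q.mulVecLin) Q.mulVecLin := by
    constructor
    · intro x; exact LinearMap.mem_range_self _ x
    · rintro x ⟨y, rfl⟩
      exact congrFun (congrArg (fun f => f.toFun) hc) y
  have ht := hproj.trace
  rw [LinearMap.trace_eq_matrix_trace ℝ (Pi.basisFun ℝ (Fin n)),
    LinearMap.toMatrix_eq_toMatrix'] at ht
  rw [show LinearMap.toMatrix' Q.mulVecLin = Q from LinearMap.toMatrix'_toLin' Q] at ht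
  rw [Matrix.rank, ht]

lemma core {p r k : ℕ} (U Y : Matrix (Fin p) (Fin r) ℝ)
    (Ui Yi : Fin k → Matrix (Fin p) (Fin r) ℝ)
    (hUsum : ∑ i, Ui i = U) (hYsum : ∑ i, Yi i = Y)
    (horthYU : ∀ i j, i ≠ j → (Yi i)ᵀ * Ui j = 0)
    (horthUY : ∀ i j, i ≠ j → (Ui i)ᵀ * Yi j = 0)
    (h1 : ∀ i, Ui i * (Yi i)ᵀ * Ui i = Ui i)
    (h2 : ∀ i, (Yi i)ᵀ * Ui i * (Yi i)ᵀ = (Yi i)ᵀ)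
    (h4 : ∀ i, ((Yi i)ᵀ * Ui i)ᵀ = (Yi i)ᵀ * Ui i)
    (hUrank : U.rank = r) :
    (U * Uᵀ - ∑ i, Ui i * (Ui i)ᵀ).rank + r
      = (∑ i, (Ui i).rank) + (U - U * Yᵀ * U).rank := by
  classical
  have F4 : ∀ i, Ui i * ((Yi i)ᵀ * Ui i) = Ui i := fun i => pinv_AG _ _ (h1 i)
  have F4' : ∀ i, ((Yi i)ᵀ * Ui i) * (Ui i)ᵀ = (Ui i)ᵀ := fun i => pinv_GAt _ _ (h1 i) (h4 i)
  have F3 : ∀ i, ((Yi i)ᵀ * Ui i) * ((Yi i)ᵀ * Ui i) = (Yi i)ᵀ * Ui i :=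
    fun i => pinv_GG _ _ (h2 i)
  have F6 : ∀ i, (Ui i)ᵀ * Yi i = (Yi i)ᵀ * Ui i := fun i => pinv_AtB _ _ (h4 i)
  have hUtsum : ∑ i, (Ui i)ᵀ = Uᵀ := by
    rw [← hUsum, Matrix.transpose_sum]
  have hYU : ∀ i, (Yi i)ᵀ * U = (Yi i)ᵀ * Ui i := by
    intro i
    rw [← hUsum, Matrix.mul_sum]
    exact Finset.sum_eq_single i (fun j _ hj => horthYU i j (Ne.symm hj)) (by simp)
  have hUY : ∀ i, (Ui i)ᵀ * Y = (Yi i)ᵀ * Ui i := by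
    intro i
    rw [← hYsum, Matrix.mul_sum,
      Finset.sum_eq_single i (fun j _ hj => horthUY i j (Ne.symm hj)) (by simp)]
    exact F6 i
  have hGm1 : Yᵀ * U = ∑ i, (Yi i)ᵀ * Ui i := by
    rw [← hYsum, Matrix.transpose_sum, Matrix.sum_mul]
    exact Finset.sum_congr rfl fun i _ => hYU i
  have hGsymm : (Yᵀ * U)ᵀ = Yᵀ * U := by
    rw [hGm1, Matrix.transpose_sum]
    exact Finset.sum_congr rfl fun i _ => h4 i
  have hUtY : Uᵀ * Y = Yᵀ * U := by
    conv_rhs => rw [← hGsymm]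
    rw [Matrix.transpose_mul, Matrix.transpose_transpose]
  have hUiP : ∀ i, (Ui i)ᵀ * (∑ j, Yi j * (Ui j)ᵀ) = (Ui i)ᵀ := by
    intro i
    rw [Matrix.mul_sum,
      Finset.sum_eq_single i (fun j _ hj => by
        rw [← Matrix.mul_assoc, horthUY i j (Ne.symm hj), Matrix.zero_mul]) (by simp),
      ← Matrix.mul_assoc, F6 i, F4' i]
  have hMY : (U * Uᵀ - ∑ i, Ui i * (Ui i)ᵀ) * Y = U * (Yᵀ * U) - U := by
    rw [Matrix.sub_mul, Matrix.mul_assoc, hUtY]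
    congr 1
    rw [Matrix.sum_mul]
    calc ∑ i, Ui i * (Ui i)ᵀ * Y = ∑ i, Ui i := Finset.sum_congr rfl fun i _ => by
          rw [Matrix.mul_assoc, hUY i, F4 i]
      _ = U := hUsum
  have hYM : ∀ j, (Yi j)ᵀ * (U * Uᵀ - ∑ i, Ui i * (Ui i)ᵀ)
      = ((Yi j)ᵀ * Ui j) * Uᵀ - (Ui j)ᵀ := by
    intro j
    rw [Matrix.mul_sub]
    congr 1
    · rw [← Matrix.mul_assoc, hYU j]
    · rw [Matrix.mul_sum,
        Finset.sum_eq_single j (fun i _ hi => by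
          rw [← Matrix.mul_assoc, horthYU j i (Ne.symm hi), Matrix.zero_mul]) (by simp),
        ← Matrix.mul_assoc, F4' j]
  have hUinj : Function.Injective U.mulVecLin := by
    have h5 := LinearMap.finrank_range_add_finrank_ker U.mulVecLin
    rw [show Module.finrank ℝ (Fin r → ℝ) = r from Module.finrank_fin_fun ℝ] at h5
    have hrk : Module.finrank ℝ (LinearMap.range U.mulVecLin) = r := hUrank
    have hker : Module.finrank ℝ (LinearMap.ker U.mulVecLin) = 0 := by omega
    rw [← LinearMap.ker_eq_bot]
    exact Submodule.finrank_eq_zero.mp hker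
  have hrankUW : ∀ W : Matrix (Fin r) (Fin r) ℝ, (U * W).rank = W.rank := by
    intro W
    rw [Matrix.rank, Matrix.rank, Matrix.mulVecLin_mul, LinearMap.range_comp]
    exact (LinearEquiv.finrank_eq (Submodule.equivMapOfInjective _ hUinj _)).symm
  have hUUYU : U - U * Yᵀ * U = U * (1 - Yᵀ * U) := by
    rw [Matrix.mul_sub, Matrix.mul_one, Matrix.mul_assoc]
  have hPP : (∑ i, Yi i * (Ui i)ᵀ) * (∑ j, Yi j * (Ui j)ᵀ) = ∑ i, Yi i * (Ui i)ᵀ := by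
    rw [Matrix.sum_mul]
    refine Finset.sum_congr rfl fun i _ => ?_
    rw [Matrix.mul_assoc, hUiP i]
  have hrankP : ((∑ i, Yi i * (Ui i)ᵀ).rank : ℝ) = ∑ i, ((Ui i).rank : ℝ) := by
    rw [aux_rank_eq_trace' _ hPP, Matrix.trace_sum]
    refine Finset.sum_congr rfl fun i _ => ?_
    rw [Matrix.trace_mul_comm, F6 i, ← aux_rank_eq_trace' _ (F3 i), pinv_rank _ _ (h1 i)]
  have e6 : (∑ i, Yi i * (Ui i)ᵀ).rank = ∑ i, (Ui i).rank := by
    exact_mod_cast hrankP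
  -- kernels
  set KM := LinearMap.ker (U * Uᵀ - ∑ i, Ui i * (Ui i)ᵀ).mulVecLin with hKMdef
  set KP := LinearMap.ker (∑ i, Yi i * (Ui i)ᵀ).mulVecLin with hKPdef
  set KG := LinearMap.ker ((1 : Matrix (Fin r) (Fin r) ℝ) - Yᵀ * U).mulVecLin with hKGdef
  have hUiz : ∀ z : Fin p → ℝ, z ∈ KP → ∀ i, (Ui i)ᵀ *ᵥ z = 0 := by
    intro z hz i
    have hz' : (∑ j, Yi j * (Ui j)ᵀ) *ᵥ z = 0 := hz
    calc (Ui i)ᵀ *ᵥ z = ((Ui i)ᵀ * (∑ j, Yi j * (Ui j)ᵀ)) *ᵥ z := by rw [hUiP i]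
      _ = (Ui i)ᵀ *ᵥ ((∑ j, Yi j * (Ui j)ᵀ) *ᵥ z) := by rw [Matrix.mulVec_mulVec]
      _ = 0 := by rw [hz', Matrix.mulVec_zero]
  have hUz : ∀ z ∈ KP, Uᵀ *ᵥ z = 0 := by
    intro z hz
    rw [← hUtsum, aux_sum_mulVec']
    exact Finset.sum_eq_zero fun i _ => hUiz z hz i
  have hGix : ∀ x ∈ KM, ∀ j, ((Yi j)ᵀ * Ui j) *ᵥ (Uᵀ *ᵥ x) = (Ui j)ᵀ *ᵥ x := by
    intro x hx j
    have hx' : (U * Uᵀ - ∑ i, Ui i * (Ui i)ᵀ) *ᵥ x = 0 := hx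
    have h8 : (0 : Fin r → ℝ) = ((Yi j)ᵀ * Ui j) *ᵥ (Uᵀ *ᵥ x) - (Ui j)ᵀ *ᵥ x := by
      calc (0 : Fin r → ℝ) = (Yi j)ᵀ *ᵥ ((U * Uᵀ - ∑ i, Ui i * (Ui i)ᵀ) *ᵥ x) := by
            rw [hx', Matrix.mulVec_zero]
        _ = ((Yi j)ᵀ * (U * Uᵀ - ∑ i, Ui i * (Ui i)ᵀ)) *ᵥ x := Matrix.mulVec_mulVec _ _ _
        _ = (((Yi j)ᵀ * Ui j) * Uᵀ - (Ui j)ᵀ) *ᵥ x := by rw [hYM j]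
        _ = (((Yi j)ᵀ * Ui j) * Uᵀ) *ᵥ x - (Ui j)ᵀ *ᵥ x := Matrix.sub_mulVec _ _ _
        _ = ((Yi j)ᵀ * Ui j) *ᵥ (Uᵀ *ᵥ x) - (Ui j)ᵀ *ᵥ x := by rw [Matrix.mulVec_mulVec]
    exact (sub_eq_zero.mp h8.symm)
  have hcmem : ∀ x ∈ KM, (Uᵀ *ᵥ x) ∈ KG := by
    intro x hx
    show ((1 : Matrix (Fin r) (Fin r) ℝ) - Yᵀ * U) *ᵥ (Uᵀ *ᵥ x) = 0
    rw [Matrix.sub_mulVec, Matrix.one_mulVec, hGm1, aux_sum_mulVec',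
      Finset.sum_congr rfl fun j _ => hGix x hx j, ← aux_sum_mulVec', hUtsum, sub_self]
  have hzmem : ∀ x ∈ KM, (x - Y *ᵥ (Uᵀ *ᵥ x)) ∈ KP := by
    intro x hx
    show (∑ j, Yi j * (Ui j)ᵀ) *ᵥ (x - Y *ᵥ (Uᵀ *ᵥ x)) = 0
    rw [aux_sum_mulVec']
    refine Finset.sum_eq_zero fun j _ => ?_
    have h9 : (Ui j)ᵀ *ᵥ (x - Y *ᵥ (Uᵀ *ᵥ x)) = 0 := by
      rw [Matrix.mulVec_sub, Matrix.mulVec_mulVec, hUY j, hGix x hx j, sub_self]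
    rw [← Matrix.mulVec_mulVec, h9, Matrix.mulVec_zero]
  -- the linear equivalence
  set η : (KP × KG) →ₗ[ℝ] (Fin p → ℝ) :=
    LinearMap.coprod (KP.subtype) (Y.mulVecLin ∘ₗ KG.subtype) with hηdef
  have hηmem : ∀ w : KP × KG, η w ∈ KM := by
    rintro ⟨⟨z, hz⟩, ⟨c, hc⟩⟩
    show (U * Uᵀ - ∑ i, Ui i * (Ui i)ᵀ) *ᵥ (z + Y *ᵥ c) = 0
    have hcc : ((1 : Matrix (Fin r) (Fin r) ℝ) - Yᵀ * U) *ᵥ c = 0 := hc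
    have h1z : (U * Uᵀ - ∑ i, Ui i * (Ui i)ᵀ) *ᵥ z = 0 := by
      rw [Matrix.sub_mulVec, aux_sum_mulVec']
      have e1 : (U * Uᵀ) *ᵥ z = 0 := by
        rw [← Matrix.mulVec_mulVec, hUz z hz, Matrix.mulVec_zero]
      have e2 : ∀ i, (Ui i * (Ui i)ᵀ) *ᵥ z = 0 := fun i => by
        rw [← Matrix.mulVec_mulVec, hUiz z hz i, Matrix.mulVec_zero]
      rw [e1, Finset.sum_congr rfl fun i _ => e2 i]
      simp
    have h2c : (U * Uᵀ - ∑ i, Ui i * (Ui i)ᵀ) *ᵥ (Y *ᵥ c) = 0 := by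
      rw [Matrix.mulVec_mulVec, hMY,
        show U * (Yᵀ * U) - U = -(U * (1 - Yᵀ * U)) by
          rw [Matrix.mul_sub, Matrix.mul_one, neg_sub],
        Matrix.neg_mulVec, ← Matrix.mulVec_mulVec, hcc, Matrix.mulVec_zero, neg_zero]
    rw [Matrix.mulVec_add, h1z, h2c, add_zero]
  set η' := LinearMap.codRestrict KM η hηmem with hη'def
  have h0 : ∀ w, η' w = 0 → w = 0 := by
    rintro ⟨⟨z, hz⟩, ⟨c, hc⟩⟩ hw
    have hval : z + Y *ᵥ c = 0 := congrArg Subtype.val hw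
    have h6 : (Yᵀ * U) *ᵥ c = 0 := by
      have h7 := congrArg (fun v => Uᵀ *ᵥ v) hval
      simp only [Matrix.mulVec_add, hUz z hz, zero_add, Matrix.mulVec_mulVec, hUtY,
        Matrix.mulVec_zero] at h7
      exact h7
    have hc0 : c = 0 := by
      have h7 : ((1 : Matrix (Fin r) (Fin r) ℝ) - Yᵀ * U) *ᵥ c = 0 := hc
      rwa [Matrix.sub_mulVec, Matrix.one_mulVec, h6, sub_zero] at h7
    have hz0 : z = 0 := by
      rw [hc0, Matrix.mulVec_zero, add_zero] at hval
      exact hval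
    simp [Prod.ext_iff, Subtype.ext_iff, hz0, hc0]
  have hinj : Function.Injective η' :=
    LinearMap.ker_eq_bot.mp (LinearMap.ker_eq_bot'.mpr h0)
  have hsurj : Function.Surjective η' := by
    rintro ⟨x, hx⟩
    refine ⟨(⟨x - Y *ᵥ (Uᵀ *ᵥ x), hzmem x hx⟩, ⟨Uᵀ *ᵥ x, hcmem x hx⟩), ?_⟩
    apply Subtype.ext
    show (x - Y *ᵥ (Uᵀ *ᵥ x)) + Y *ᵥ (Uᵀ *ᵥ x) = x
    abel
  have e3 : (U * Uᵀ - ∑ i, Ui i * (Ui i)ᵀ).rank + Module.finrank ℝ KM = p := by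
    have h5 := LinearMap.finrank_range_add_finrank_ker (U * Uᵀ - ∑ i, Ui i * (Ui i)ᵀ).mulVecLin
    rwa [show Module.finrank ℝ (Fin p → ℝ) = p from Module.finrank_fin_fun ℝ] at h5
  have e5 : (∑ i, Yi i * (Ui i)ᵀ).rank + Module.finrank ℝ KP = p := by
    have h5 := LinearMap.finrank_range_add_finrank_ker (∑ i, Yi i * (Ui i)ᵀ).mulVecLin
    rwa [show Module.finrank ℝ (Fin p → ℝ) = p from Module.finrank_fin_fun ℝ] at h5
  have e7 : ((1 : Matrix (Fin r) (Fin r) ℝ) - Yᵀ * U).rank + Module.finrank ℝ KG = r := by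
    have h5 := LinearMap.finrank_range_add_finrank_ker
      ((1 : Matrix (Fin r) (Fin r) ℝ) - Yᵀ * U).mulVecLin
    rwa [show Module.finrank ℝ (Fin r → ℝ) = r from Module.finrank_fin_fun ℝ] at h5
  have e4 : Module.finrank ℝ KM = Module.finrank ℝ KP + Module.finrank ℝ KG := by
    have h5 := LinearEquiv.finrank_eq (LinearEquiv.ofBijective η' ⟨hinj, hsurj⟩)
    rw [Module.finrank_prod] at h5
    exact h5.symm
  have e8 : (U - U * Yᵀ * U).rank = ((1 : Matrix (Fin r) (Fin r) ℝ) - Yᵀ * U).rank := by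
    rw [hUUYU]; exact hrankUW _
  omega

/-- multiplicity of `1` as a generalized eigenvalue in the latent variable model. -/
theorem statement2
    (k p r : ℕ) (hk : 2 ≤ k) (hr : 1 ≤ r) (hrp : r ≤ p)
    (p_ : Fin k → ℕ) (hp : p = ∑ i, p_ i)
    (β : Fin p → Fin k) (hβ : ∀ i : Fin k, ({a : Fin p | β a = i}).ncard = p_ i)
    (U : Matrix (Fin p) (Fin r) ℝ)
    (Ψ : Matrix (Fin p) (Fin p) ℝ) (hΨblock : blockPart β Ψ = Ψ) (hΨpd : Ψ.PosDef)
    (S S0 : Matrix (Fin p) (Fin p) ℝ)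
    (hS : S = U * Uᵀ + Ψ) (hS0 : S0 = blockPart β S)
    (K : Matrix (Fin p) (Fin p) ℝ) (lam : Fin p → ℝ) (hlam : Antitone lam)
    (hKnorm : Kᵀ * S0 * K = 1) (hKdec : S = S0 * K * Matrix.diagonal lam * Kᵀ * S0)
    (hUrank : U.rank = r)
    (hsig : ∀ v : Fin r → ℝ, (∑ j, v j ^ 2) ≤ v ⬝ᵥ (Uᵀ * S0⁻¹ * U).mulVec v)
    -- `Y` is the block matrix whose `i`-th block is `(U_i†)ᵀ`, characterized blockwise by
    -- the four Penrose conditions for the Moore–Penrose pseudoinverse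
    (Y : Matrix (Fin p) (Fin r) ℝ)
    (hY : ∀ i : Fin k,
      restrictRows β i U * (restrictRows β i Y)ᵀ * restrictRows β i U = restrictRows β i U ∧
      (restrictRows β i Y)ᵀ * restrictRows β i U * (restrictRows β i Y)ᵀ =
        (restrictRows β i Y)ᵀ ∧
      (restrictRows β i U * (restrictRows β i Y)ᵀ)ᵀ =
        restrictRows β i U * (restrictRows β i Y)ᵀ ∧
      ((restrictRows β i Y)ᵀ * restrictRows β i U)ᵀ =
        (restrictRows β i Y)ᵀ * restrictRows β i U) :
    (({j : Fin p | lam j = 1}).ncard : ℤ) =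
      (p : ℤ) - ∑ i : Fin k, ((restrictRows β i U).rank : ℤ) + (r : ℤ)
        - ((U - U * Yᵀ * U).rank : ℤ) := by
  classical
  have hUsum : ∑ i, restrictRows β i U = U := aux_sum_restrict β U
  have hYsum : ∑ i, restrictRows β i Y = Y := aux_sum_restrict β Y
  have hcore := core U Y (fun i => restrictRows β i U) (fun i => restrictRows β i Y)
    hUsum hYsum (fun i j hij => aux_orth β hij Y U) (fun i j hij => aux_orth β hij U Y)
    (fun i => (hY i).1) (fun i => (hY i).2.1) (fun i => (hY i).2.2.2) hUrank
  have hcore' : (U * Uᵀ - ∑ i, restrictRows β i U * (restrictRows β i U)ᵀ).rank + r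
      = (∑ i, (restrictRows β i U).rank) + (U - U * Yᵀ * U).rank := hcore
  have hS0' : S0 = (∑ i, restrictRows β i U * (restrictRows β i U)ᵀ) + Ψ := by
    rw [hS0, hS, aux_blockPart_add, aux_blockPart, hΨblock]
  have hM : S - S0 = U * Uᵀ - ∑ i, restrictRows β i U * (restrictRows β i U)ᵀ := by
    rw [hS, hS0']; abel
  have hS0pd : S0.PosDef := by
    rw [hS0']
    refine Matrix.PosDef.posSemidef_add ?_ hΨpd
    have hpsd : ∀ i, (restrictRows β i U * (restrictRows β i U)ᵀ).PosSemidef := fun i => by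
      simpa using Matrix.posSemidef_self_mul_conjTranspose (restrictRows β i U)
    exact Finset.sum_induction _ Matrix.PosSemidef (fun a b ha hb => ha.add hb)
      Matrix.PosSemidef.zero (fun i _ => hpsd i)
  have hS0det : IsUnit S0.det := (Matrix.isUnit_iff_isUnit_det S0).mp hS0pd.isUnit
  have hKdet : IsUnit K.det := by
    have hd := congrArg Matrix.det hKnorm
    rw [Matrix.det_mul, Matrix.det_mul, Matrix.det_transpose, Matrix.det_one] at hd
    exact IsUnit.of_mul_eq_one _ (by rw [← mul_assoc]; exact hd)
  have hKright : K * (Kᵀ * S0) = 1 := by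
    have hinv : K⁻¹ = Kᵀ * S0 := Matrix.inv_eq_left_inv hKnorm
    rw [← hinv, Matrix.mul_nonsing_inv K hKdet]
  have hfact : S - S0 = (S0 * K) * Matrix.diagonal (fun j => lam j - 1) * (Kᵀ * S0) := by
    have hdl : Matrix.diagonal (fun j => lam j - 1) = Matrix.diagonal lam - 1 := by
      conv_rhs => rw [← Matrix.diagonal_one]
      rw [Matrix.diagonal_sub]
    rw [hdl, Matrix.mul_sub, Matrix.mul_one, Matrix.sub_mul]
    congr 1
    · rw [hKdec]; simp only [Matrix.mul_assoc]
    · rw [Matrix.mul_assoc, hKright, Matrix.mul_one]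
  have hrankdiag : (S - S0).rank = Fintype.card {j // lam j - 1 ≠ 0} := by
    rw [hfact,
      Matrix.rank_mul_eq_left_of_isUnit_det (Kᵀ * S0) _
        (by rw [Matrix.det_mul, Matrix.det_transpose]; exact hKdet.mul hS0det),
      Matrix.rank_mul_eq_right_of_isUnit_det (S0 * K) _
        (by rw [Matrix.det_mul]; exact hS0det.mul hKdet)]
    exact Matrix.rank_diagonal _
  have hcompl : Fintype.card {j // lam j - 1 ≠ 0} + Fintype.card {j // lam j = 1} = p := by
    have h1 : {j : Fin p // lam j - 1 ≠ 0} ≃ {j : Fin p // ¬ (lam j = 1)} :=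
      Equiv.subtypeEquivRight (fun j => sub_ne_zero)
    rw [Fintype.card_congr h1, Fintype.card_subtype_compl]
    have hle := Fintype.card_subtype_le (fun j : Fin p => lam j = 1)
    rw [Fintype.card_fin] at *
    omega
  have hncard : ({j : Fin p | lam j = 1}).ncard = Fintype.card {j // lam j = 1} := by
    rw [← Nat.card_coe_set_eq, Nat.card_eq_fintype_card]
    exact Fintype.card_congr (Equiv.subtypeEquivRight fun j => Iff.rfl)
  rw [hM] at hrankdiag
  have hsum : (∑ i : Fin k, ((restrictRows β i U).rank : ℤ))
      = ((∑ i : Fin k, (restrictRows β i U).rank : ℕ) : ℤ) :=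
    (Nat.cast_sum Finset.univ fun i => (restrictRows β i U).rank).symm
  rw [hncard, hsum]
  omega


end
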